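/- Let n ≥ 2 and r > 0 satisfy 2·r·n ≥ 1 and 2·r ≤ 1 (so Cov_I(n,r) is nonempty). Then Cov_I(n,r) is path-connected if and only if 2·r·(n−1) ≥ 1 (i.e. if and only if there is at least one excess agent). -/

import Mathlib

/-- The covering configuration space of `n` labelled radius-`r` intervals on `[0,1]`. -/
def CovI (n : ℕ) (r : ℝ) : Set (Fin n → ℝ) :=
  {x | (∀ i, Set.Icc (x i - r) (x i + r) ⊆ Set.Icc 0 1) ∧
    Set.Icc (0 : ℝ) 1 ⊆ ⋃ i, Set.Icc (x i - r) (x i + r)}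

namespace CovIAux

open Set

variable {m : ℕ} {r : ℝ}

/-- The linear-inequality system describing a sorted covering configuration. -/
def sys (m : ℕ) (r : ℝ) (y : Fin (m + 1) → ℝ) : Prop :=
  Monotone y ∧ (∀ i, r ≤ y i ∧ y i + r ≤ 1) ∧ y 0 ≤ r ∧ 1 - r ≤ y (Fin.last m) ∧
    ∀ i : Fin m, y i.succ ≤ y i.castSucc + 2 * r

lemma box_of_mem (hr : 0 < r) {n : ℕ} {x : Fin n → ℝ} (hx : x ∈ CovI n r) (i : Fin n) :
    r ≤ x i ∧ x i + r ≤ 1 := by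
  have h1 : x i - r ∈ Set.Icc (0 : ℝ) 1 := hx.1 i ⟨le_refl _, by linarith⟩
  have h2 : x i + r ∈ Set.Icc (0 : ℝ) 1 := hx.1 i ⟨by linarith, le_refl _⟩
  exact ⟨by linarith [h1.1], h2.2⟩

lemma sys_mem (hr : 0 < r) {y : Fin (m + 1) → ℝ} (hy : sys m r y) : y ∈ CovI (m + 1) r := by
  classical
  obtain ⟨hmono, hbox, hlo, hhi, hgap⟩ := hy
  constructor
  · intro i t ht
    obtain ⟨ha, hb⟩ := ht
    obtain ⟨h1, h2⟩ := hbox i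
    exact ⟨by linarith, by linarith⟩
  · intro t ht
    obtain ⟨ht0, ht1⟩ := ht
    set S := Finset.univ.filter (fun i : Fin (m + 1) => t ≤ y i + r) with hS
    have hne : S.Nonempty := ⟨Fin.last m, by
      simp only [hS, Finset.mem_filter, Finset.mem_univ, true_and]
      linarith⟩
    set i := S.min' hne with hi
    have hiS : i ∈ S := S.min'_mem hne
    have hub : t ≤ y i + r := by
      simpa only [hS, Finset.mem_filter, Finset.mem_univ, true_and] using hiS
    have hlb : y i - r ≤ t := by
      rcases eq_or_ne i 0 with h0 | h0
      · rw [h0]; linarith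
      · obtain ⟨j, hj⟩ := Fin.eq_succ_of_ne_zero h0
        have hcs : j.castSucc ∉ S := by
          intro hmem
          have h1 := S.min'_le _ hmem
          rw [← hi, hj] at h1
          exact absurd h1 (not_le.mpr (Fin.castSucc_lt_succ : j.castSucc < j.succ))
        have h2 : ¬ t ≤ y j.castSucc + r := by
          simpa only [hS, Finset.mem_filter, Finset.mem_univ, true_and] using hcs
        have h3 := hgap j
        rw [hj]
        linarith
    exact Set.mem_iUnion.2 ⟨i, hlb, hub⟩

lemma sys_comp_mem (hr : 0 < r) {x : Fin (m + 1) → ℝ} (σ : Equiv.Perm (Fin (m + 1)))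
    (h : sys m r (x ∘ σ)) : x ∈ CovI (m + 1) r := by
  have hx : (x ∘ σ) ∈ CovI (m + 1) r := sys_mem hr h
  constructor
  · intro i
    have := hx.1 (σ⁻¹ i)
    simpa using this
  · refine hx.2.trans (Set.iUnion_subset fun j => ?_)
    exact Set.subset_iUnion (fun i => Set.Icc (x i - r) (x i + r)) (σ j)

lemma sys_combo {y w : Fin (m + 1) → ℝ} (hy : sys m r y) (hw : sys m r w)
    {t : ℝ} (h0 : 0 ≤ t) (h1 : t ≤ 1) :
    sys m r (fun i => (1 - t) * y i + t * w i) := by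
  obtain ⟨m1, b1, l1, u1, g1⟩ := hy
  obtain ⟨m2, b2, l2, u2, g2⟩ := hw
  have h01 : (0:ℝ) ≤ 1 - t := by linarith
  refine ⟨fun i j hij => ?_, fun i => ⟨?_, ?_⟩, ?_, ?_, fun i => ?_⟩
  · have H1 := mul_le_mul_of_nonneg_left (m1 hij) h01
    have H2 := mul_le_mul_of_nonneg_left (m2 hij) h0
    dsimp only
    linarith
  · dsimp only; nlinarith [(b1 i).1, (b2 i).1]
  · dsimp only; nlinarith [(b1 i).2, (b2 i).2]
  · dsimp only; nlinarith [l1, l2]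
  · dsimp only; nlinarith [u1, u2]
  · dsimp only; nlinarith [g1 i, g2 i]

lemma joined_of_sys (hr : 0 < r) {x z : Fin (m + 1) → ℝ} (σ : Equiv.Perm (Fin (m + 1)))
    (hx : sys m r (x ∘ σ)) (hz : sys m r (z ∘ σ)) : JoinedIn (CovI (m + 1) r) x z := by
  refine ⟨⟨⟨fun t => fun i => (1 - (t : ℝ)) * x i + (t : ℝ) * z i, ?_⟩, ?_, ?_⟩, ?_⟩
  · refine continuous_pi fun i => ?_
    exact ((continuous_const.sub continuous_subtype_val).mul continuous_const).add
      (continuous_subtype_val.mul continuous_const)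
  · funext i; norm_num
  · funext i; norm_num
  · intro t
    refine sys_comp_mem hr σ ?_
    have := sys_combo hx hz t.2.1 t.2.2
    exact this

lemma exists_sys (hr : 0 < r) {x : Fin (m + 1) → ℝ} (hx : x ∈ CovI (m + 1) r) :
    ∃ σ : Equiv.Perm (Fin (m + 1)), sys m r (x ∘ σ) := by
  classical
  refine ⟨Tuple.sort x, ?_⟩
  set σ := Tuple.sort x with hσ
  have hmono : Monotone (x ∘ σ) := Tuple.monotone_sort x
  obtain ⟨hcont, hcov⟩ := hx
  have hbox : ∀ i, r ≤ x i ∧ x i + r ≤ 1 := box_of_mem hr ⟨hcont, hcov⟩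
  refine ⟨hmono, fun i => hbox _, ?_, ?_, ?_⟩
  · obtain ⟨i, hi⟩ := Set.mem_iUnion.1 (hcov ⟨le_refl 0, zero_le_one⟩)
    have h2 : (x ∘ σ) 0 ≤ (x ∘ σ) (σ⁻¹ i) := hmono (Fin.zero_le _)
    have h3 : (x ∘ σ) (σ⁻¹ i) = x i := by simp
    have h4 := hi.1
    rw [h3] at h2
    simpa using h2.trans (by linarith)
  · obtain ⟨i, hi⟩ := Set.mem_iUnion.1 (hcov ⟨zero_le_one, le_refl 1⟩)
    have h2 : (x ∘ σ) (σ⁻¹ i) ≤ (x ∘ σ) (Fin.last m) := hmono (Fin.le_last _)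
    have h3 : (x ∘ σ) (σ⁻¹ i) = x i := by simp
    have h4 := hi.2
    rw [h3] at h2
    calc 1 - r ≤ x i := by linarith
    _ ≤ _ := h2
  · intro i
    by_contra hlt
    push_neg at hlt
    set a := (x ∘ σ) i.castSucc with ha
    set b := (x ∘ σ) i.succ with hb
    have hba : ∀ j : Fin (m + 1), r ≤ x j ∧ x j + r ≤ 1 := hbox
    have haR := hbox (σ i.castSucc)
    have hbR := hbox (σ i.succ)
    have haR' : r ≤ a ∧ a + r ≤ 1 := haR
    have hbR' : r ≤ b ∧ b + r ≤ 1 := hbR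
    have hab : a < b := by nlinarith [hlt]
    set t := (a + b) / 2 with htdef
    have htmem : t ∈ Set.Icc (0 : ℝ) 1 := by
      constructor
      · nlinarith [haR'.1]
      · nlinarith [hbR'.2]
    obtain ⟨j, hj1, hj2⟩ := Set.mem_iUnion.1 (hcov htmem)
    have hxj : x j = (x ∘ σ) (σ⁻¹ j) := by simp
    rcases le_or_gt (σ⁻¹ j) i.castSucc with hle | hgt
    · have h5 : (x ∘ σ) (σ⁻¹ j) ≤ a := hmono hle
      rw [hxj] at hj2
      linarith
    · have hge : i.succ ≤ σ⁻¹ j := Fin.castSucc_lt_iff_succ_le.mp hgt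
      have h5 : b ≤ (x ∘ σ) (σ⁻¹ j) := hmono hge
      rw [hxj] at hj1
      linarith

/-- Canonical equally-spaced covering configuration with `m+1` intervals. -/
noncomputable def pcfg (m : ℕ) (r : ℝ) : Fin (m + 1) → ℝ :=
  fun i => r + (i : ℕ) * ((1 - 2 * r) / m)

/-- Hub configuration: intervals at the `m` canonical positions for `m` intervals,
with positions `k` and `k+1` doubled. -/
noncomputable def ecfg (m : ℕ) (r : ℝ) (k : Fin m) : Fin (m + 1) → ℝ :=
  fun j => r + ((if (j : ℕ) ≤ (k : ℕ) then (j : ℕ) else (j : ℕ) - 1) : ℕ) *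
    ((1 - 2 * r) / ((m : ℝ) - 1))

lemma sys_pcfg (hr : 0 < r) (hm : 1 ≤ m) (h2r : 2 * r ≤ 1)
    (h1 : 1 ≤ 2 * r * ((m : ℝ) + 1)) : sys m r (pcfg m r) := by
  have hm0 : (0 : ℝ) < m := by exact_mod_cast hm
  have hd0 : 0 ≤ (1 - 2 * r) / m := div_nonneg (by linarith) hm0.le
  have hdle : (1 - 2 * r) / m ≤ 2 * r := by
    rw [div_le_iff₀ hm0]; nlinarith
  have hlast : pcfg m r (Fin.last m) = 1 - r := by
    simp only [pcfg, Fin.val_last]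
    field_simp
    ring
  constructor
  · intro i j hij
    have : ((i : ℕ) : ℝ) ≤ ((j : ℕ) : ℝ) := by exact_mod_cast hij
    exact add_le_add_right (mul_le_mul_of_nonneg_right this hd0) r
  refine ⟨fun i => ⟨?_, ?_⟩, ?_, ?_, fun i => ?_⟩
  · simp only [pcfg]
    nlinarith [mul_nonneg (Nat.cast_nonneg (i : ℕ) : (0:ℝ) ≤ (i:ℕ)) hd0]
  · have hile : pcfg m r i ≤ pcfg m r (Fin.last m) := by
      apply add_le_add_right
      apply mul_le_mul_of_nonneg_right _ hd0
      exact_mod_cast Fin.le_last i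
    rw [hlast] at hile
    linarith
  · simp [pcfg]
  · rw [hlast]
  · simp only [pcfg, Fin.val_succ, Fin.coe_castSucc]
    push_cast
    nlinarith [hdle]

lemma sys_ecfg (hr : 0 < r) (hm : 2 ≤ m) (h2r : 2 * r ≤ 1)
    (hexc : 1 ≤ 2 * r * (m : ℝ)) (k : Fin m) : sys m r (ecfg m r k) := by
  have hm1 : (1 : ℝ) ≤ (m : ℝ) - 1 := by
    have : (2 : ℝ) ≤ m := by exact_mod_cast hm
    linarith
  have hm0 : (0 : ℝ) < (m : ℝ) - 1 := by linarith
  have hd0 : 0 ≤ (1 - 2 * r) / ((m : ℝ) - 1) := div_nonneg (by linarith) hm0.le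
  have hdle : (1 - 2 * r) / ((m : ℝ) - 1) ≤ 2 * r := by
    rw [div_le_iff₀ hm0]; nlinarith
  set d := (1 - 2 * r) / ((m : ℝ) - 1) with hd
  have hnum : ∀ j : Fin (m + 1),
      ((if (j : ℕ) ≤ (k : ℕ) then (j : ℕ) else (j : ℕ) - 1) : ℕ) ≤ m - 1 := by
    intro j
    have hj := j.isLt
    have hk := k.isLt
    split_ifs <;> omega
  have hmax : ((m : ℕ) - 1 : ℕ) * d = 1 - 2 * r := by
    have : (((m : ℕ) - 1 : ℕ) : ℝ) = (m : ℝ) - 1 := by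
      have : 1 ≤ m := by omega
      push_cast [this]; ring
    rw [this, hd]
    field_simp
  constructor
  · intro i j hij
    have hij' : (i : ℕ) ≤ (j : ℕ) := hij
    have : ((if (i : ℕ) ≤ (k : ℕ) then (i : ℕ) else (i : ℕ) - 1) : ℕ) ≤
        ((if (j : ℕ) ≤ (k : ℕ) then (j : ℕ) else (j : ℕ) - 1) : ℕ) := by
      split_ifs <;> omega
    have hc : (((if (i : ℕ) ≤ (k : ℕ) then (i : ℕ) else (i : ℕ) - 1) : ℕ) : ℝ) ≤
        (((if (j : ℕ) ≤ (k : ℕ) then (j : ℕ) else (j : ℕ) - 1) : ℕ) : ℝ) := by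
      exact_mod_cast this
    exact add_le_add_right (mul_le_mul_of_nonneg_right hc hd0) r
  refine ⟨fun i => ⟨?_, ?_⟩, ?_, ?_, fun i => ?_⟩
  · simp only [ecfg]
    nlinarith [mul_nonneg (Nat.cast_nonneg ((if (i : ℕ) ≤ (k : ℕ) then (i : ℕ) else (i : ℕ) - 1))) hd0]
  · simp only [ecfg, ← hd]
    have h5 : (((if (i : ℕ) ≤ (k : ℕ) then (i : ℕ) else (i : ℕ) - 1) : ℕ) : ℝ) * d ≤
        (((m : ℕ) - 1 : ℕ) : ℝ) * d := by
      apply mul_le_mul_of_nonneg_right _ hd0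
      exact_mod_cast hnum i
    rw [hmax] at h5
    linarith
  · simp [ecfg]
  · have hlastnum : ((if ((Fin.last m : Fin (m+1)) : ℕ) ≤ (k : ℕ) then ((Fin.last m : Fin (m+1)) : ℕ)
        else ((Fin.last m : Fin (m+1)) : ℕ) - 1) : ℕ) = m - 1 := by
      have hk := k.isLt
      simp only [Fin.val_last]
      split_ifs <;> omega
    simp only [ecfg, ← hd, hlastnum]
    rw [hmax]
    linarith
  · have hsuc : ((if ((i.succ : Fin (m+1)) : ℕ) ≤ (k : ℕ) then ((i.succ : Fin (m+1)) : ℕ)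
        else ((i.succ : Fin (m+1)) : ℕ) - 1) : ℕ) ≤
        ((if ((i.castSucc : Fin (m+1)) : ℕ) ≤ (k : ℕ) then ((i.castSucc : Fin (m+1)) : ℕ)
        else ((i.castSucc : Fin (m+1)) : ℕ) - 1) : ℕ) + 1 := by
      simp only [Fin.val_succ, Fin.coe_castSucc]
      split_ifs <;> omega
    have hc : ((((if ((i.succ : Fin (m+1)) : ℕ) ≤ (k : ℕ) then ((i.succ : Fin (m+1)) : ℕ)
        else ((i.succ : Fin (m+1)) : ℕ) - 1) : ℕ)) : ℝ) ≤
        (((if ((i.castSucc : Fin (m+1)) : ℕ) ≤ (k : ℕ) then ((i.castSucc : Fin (m+1)) : ℕ)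
        else ((i.castSucc : Fin (m+1)) : ℕ) - 1) : ℕ) : ℝ) + 1 := by
      exact_mod_cast (Nat.cast_le (α := ℝ)).mpr hsuc
    simp only [ecfg, ← hd]
    nlinarith [hc, hdle, hd0]

lemma ecfg_swap (hm : 2 ≤ m) (k : Fin m) :
    ecfg m r k ∘ (Equiv.swap k.castSucc k.succ : Equiv.Perm (Fin (m + 1))) = ecfg m r k := by
  have hval : ecfg m r k k.castSucc = ecfg m r k k.succ := by
    simp only [ecfg, Fin.coe_castSucc, Fin.val_succ]
    rw [if_pos le_rfl, if_neg (by omega)]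
    norm_num
  funext j
  rcases eq_or_ne j k.castSucc with rfl | h1
  · simp only [Function.comp_apply, Equiv.swap_apply_left]
    exact hval.symm
  rcases eq_or_ne j k.succ with rfl | h2
  · simp only [Function.comp_apply, Equiv.swap_apply_right]
    exact hval
  · simp only [Function.comp_apply, Equiv.swap_apply_of_ne_of_ne h1 h2]

lemma comp_inv_comp (y : Fin (m + 1) → ℝ) (τ : Equiv.Perm (Fin (m + 1))) :
    (y ∘ ⇑τ⁻¹) ∘ ⇑τ = y := by
  funext j
  simp

lemma joined_perm (hr : 0 < r) (hm : 2 ≤ m) (h2r : 2 * r ≤ 1)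
    (h1 : 1 ≤ 2 * r * ((m : ℝ) + 1)) (hexc : 1 ≤ 2 * r * (m : ℝ))
    (σ : Equiv.Perm (Fin (m + 1))) :
    JoinedIn (CovI (m + 1) r) (pcfg m r ∘ ⇑σ⁻¹) (pcfg m r) := by
  have hp : sys m r (pcfg m r) := sys_pcfg hr (by omega) h2r h1
  have key : ∀ (τ : Equiv.Perm (Fin (m + 1))) (k : Fin m),
      JoinedIn (CovI (m + 1) r) (pcfg m r ∘ ⇑τ⁻¹)
        (pcfg m r ∘ ⇑(τ * Equiv.swap k.castSucc k.succ)⁻¹) := by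
    intro τ k
    have he : sys m r (ecfg m r k) := sys_ecfg hr hm h2r hexc k
    have j1 : JoinedIn (CovI (m + 1) r) (pcfg m r ∘ ⇑τ⁻¹) (ecfg m r k ∘ ⇑τ⁻¹) :=
      joined_of_sys hr τ (by rw [comp_inv_comp]; exact hp) (by rw [comp_inv_comp]; exact he)
    have heq : ecfg m r k ∘ ⇑τ⁻¹ = ecfg m r k ∘ ⇑(τ * Equiv.swap k.castSucc k.succ)⁻¹ := by
      rw [mul_inv_rev, Equiv.swap_inv]
      funext j
      simp only [Function.comp_apply, Equiv.Perm.coe_mul]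
      conv_lhs => rw [← ecfg_swap (r := r) hm k]
      rfl
    have j2 : JoinedIn (CovI (m + 1) r)
        (ecfg m r k ∘ ⇑(τ * Equiv.swap k.castSucc k.succ)⁻¹)
        (pcfg m r ∘ ⇑(τ * Equiv.swap k.castSucc k.succ)⁻¹) :=
      joined_of_sys hr (τ * Equiv.swap k.castSucc k.succ)
        (by rw [comp_inv_comp]; exact he) (by rw [comp_inv_comp]; exact hp)
    exact (heq ▸ j1).trans j2
  have hσmem : σ ∈ Submonoid.closure
      (Set.range fun i : Fin m => Equiv.swap i.castSucc i.succ) := by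
    rw [Equiv.Perm.mclosure_swap_castSucc_succ]; trivial
  have main : ∀ τ : Equiv.Perm (Fin (m + 1)),
      JoinedIn (CovI (m + 1) r) (pcfg m r ∘ ⇑τ⁻¹) (pcfg m r) →
      JoinedIn (CovI (m + 1) r) (pcfg m r ∘ ⇑(τ * σ)⁻¹) (pcfg m r) := by
    induction hσmem using Submonoid.closure_induction with
    | mem s hs =>
      obtain ⟨k, rfl⟩ := hs
      intro τ hτ
      exact ((key τ k).symm.trans hτ)
    | one => intro τ h; simpa using h
    | mul a b ha hb iha ihb =>
      intro τ h
      rw [← mul_assoc]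
      exact ihb _ (iha _ h)
  have hstart : JoinedIn (CovI (m + 1) r) (pcfg m r ∘ ⇑(1 : Equiv.Perm (Fin (m + 1)))⁻¹)
      (pcfg m r) := by
    simpa using JoinedIn.refl (sys_mem hr hp)
  simpa using main 1 hstart

lemma not_pc (hr : 0 < r) (hm : 1 ≤ m) (h2r : 2 * r ≤ 1)
    (h1 : 1 ≤ 2 * r * ((m : ℝ) + 1)) (hlt : 2 * r * (m : ℝ) < 1) :
    ¬ PathConnectedSpace ↥(CovI (m + 1) r) := by
  classical
  intro hPC
  have h2rlt : 2 * r < 1 := by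
    have hm1 : (1 : ℝ) ≤ m := by exact_mod_cast hm
    nlinarith
  have hp : sys m r (pcfg m r) := sys_pcfg hr hm h2r h1
  set i0 : Fin (m + 1) := ⟨0, by omega⟩ with hi0
  set i1 : Fin (m + 1) := ⟨1, by omega⟩ with hi1
  have hne : i0 ≠ i1 := by simp [hi0, hi1, Fin.ext_iff]
  set s : Equiv.Perm (Fin (m + 1)) := Equiv.swap i0 i1 with hs
  set b : Fin (m + 1) → ℝ := pcfg m r ∘ ⇑s with hbdef
  have hpmem : pcfg m r ∈ CovI (m + 1) r := sys_mem hr hp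
  have hbmem : b ∈ CovI (m + 1) r := by
    refine sys_comp_mem hr s ?_
    have : (b ∘ ⇑s) = pcfg m r := by
      funext j
      simp [hbdef, hs, Equiv.swap_apply_self]
    rw [this]; exact hp
  have hdpos : (0 : ℝ) < (1 - 2 * r) / m := by
    apply div_pos (by linarith)
    exact_mod_cast Nat.pos_of_ne_zero (by omega)
  have hp01 : pcfg m r i0 < pcfg m r i1 := by
    simp only [pcfg, hi0, hi1]
    norm_num
    exact hdpos
  obtain ⟨γ, hγ⟩ := (isPathConnected_iff_pathConnectedSpace.mpr hPC).joinedIn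
    (pcfg m r) hpmem b hbmem
  set g : unitInterval → ℝ := fun t => (γ t) i0 - (γ t) i1 with hg
  have hgc : Continuous g := by
    apply Continuous.sub
    · exact (continuous_apply i0).comp γ.continuous
    · exact (continuous_apply i1).comp γ.continuous
  have hg0 : g 0 = pcfg m r i0 - pcfg m r i1 := by simp [hg]
  have hg1 : g 1 = pcfg m r i1 - pcfg m r i0 := by
    simp only [hg, Path.target]
    simp [hbdef, hs, Equiv.swap_apply_left, Equiv.swap_apply_right]
  have h0mem : (0 : ℝ) ∈ Set.Icc (g 0) (g 1) := by
    rw [hg0, hg1]; constructor <;> linarith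
  obtain ⟨t, ht⟩ := intermediate_value_univ (0 : unitInterval) 1 hgc h0mem
  set z : Fin (m + 1) → ℝ := γ t with hz
  have hzmem : z ∈ CovI (m + 1) r := hγ t
  have hzeq : z i0 = z i1 := by
    have : g t = 0 := ht
    rw [hg] at this
    dsimp at this
    linarith [this]
  -- measure contradiction
  have hsub : Set.Icc (0 : ℝ) 1 ⊆
      ⋃ i ∈ (Finset.univ.erase i0), Set.Icc (z i - r) (z i + r) := by
    intro u hu
    obtain ⟨i, hi⟩ := Set.mem_iUnion.1 (hzmem.2 hu)
    rcases eq_or_ne i i0 with rfl | h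
    · refine Set.mem_biUnion (Finset.mem_erase.2 ⟨hne.symm, Finset.mem_univ _⟩) ?_
      rwa [← hzeq]
    · exact Set.mem_biUnion (Finset.mem_erase.2 ⟨h, Finset.mem_univ _⟩) hi
  have hle1 : (1 : ENNReal) ≤
      MeasureTheory.volume (⋃ i ∈ (Finset.univ.erase i0), Set.Icc (z i - r) (z i + r)) := by
    calc (1 : ENNReal) = MeasureTheory.volume (Set.Icc (0 : ℝ) 1) := by
          simp [Real.volume_Icc]
    _ ≤ _ := MeasureTheory.measure_mono hsub
  have hle2 : MeasureTheory.volume (⋃ i ∈ (Finset.univ.erase i0), Set.Icc (z i - r) (z i + r)) ≤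
      ∑ i ∈ Finset.univ.erase i0, MeasureTheory.volume (Set.Icc (z i - r) (z i + r)) :=
    MeasureTheory.measure_biUnion_finset_le _ _
  have hvol : ∀ i : Fin (m + 1), MeasureTheory.volume (Set.Icc (z i - r) (z i + r)) =
      ENNReal.ofReal (2 * r) := by
    intro i
    rw [Real.volume_Icc]
    ring_nf
  have hsum : ∑ i ∈ Finset.univ.erase i0, MeasureTheory.volume (Set.Icc (z i - r) (z i + r)) =
      (m : ENNReal) * ENNReal.ofReal (2 * r) := by
    rw [Finset.sum_congr rfl (fun i _ => hvol i), Finset.sum_const,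
      Finset.card_erase_of_mem (Finset.mem_univ _), Finset.card_univ, Fintype.card_fin]
    simp [nsmul_eq_mul]
  have hfin : (m : ENNReal) * ENNReal.ofReal (2 * r) = ENNReal.ofReal (2 * r * m) := by
    rw [← ENNReal.ofReal_natCast m, ← ENNReal.ofReal_mul (Nat.cast_nonneg m), mul_comm (2 * r) ((m:ℕ) : ℝ)]
  have hless : ENNReal.ofReal (2 * r * m) < 1 := by
    rw [← ENNReal.ofReal_one]
    exact ENNReal.ofReal_lt_ofReal_iff (by norm_num) |>.2 hlt
  rw [hsum, hfin] at hle2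
  exact absurd (hle1.trans hle2) (not_le.mpr hless)

end CovIAux

theorem covI_pathConnected_iff_excess (n : ℕ) (hn : 2 ≤ n) (r : ℝ) (hr : 0 < r)
    (h1 : 1 ≤ 2 * r * (n : ℝ)) (h2 : 2 * r ≤ 1) :
    PathConnectedSpace (CovI n r) ↔ 1 ≤ 2 * r * ((n : ℝ) - 1) := by
  open CovIAux in
  obtain ⟨m, rfl⟩ : ∃ m, n = m + 1 := ⟨n - 1, by omega⟩
  have hm1 : 1 ≤ m := by omega
  have hmR : (1 : ℝ) ≤ (m : ℝ) := by exact_mod_cast hm1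
  have hcast : ((m + 1 : ℕ) : ℝ) - 1 = (m : ℝ) := by push_cast; ring
  have hcast2 : ((m + 1 : ℕ) : ℝ) = (m : ℝ) + 1 := by push_cast; ring
  rw [hcast]
  rw [hcast2] at h1
  rcases eq_or_lt_of_le h2 with h2e | h2l
  · -- 2r = 1 : the space is a single point, both sides hold
    constructor
    · intro _
      nlinarith
    · intro _
      have hx0 : (fun _ => r : Fin (m + 1) → ℝ) ∈ CovI (m + 1) r := by
        constructor
        · intro i u hu
          exact ⟨by linarith [hu.1], by linarith [hu.2]⟩
        · intro u hu
          exact Set.mem_iUnion.2 ⟨0, by constructor <;> [linarith [hu.1]; linarith [hu.2]]⟩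
      have huniq : ∀ x ∈ CovI (m + 1) r, x = fun _ => r := by
        intro x hx
        funext i
        obtain ⟨hb1, hb2⟩ := box_of_mem hr hx i
        show x i = r
        linarith
      refine ⟨⟨⟨_, hx0⟩⟩, fun x y => ?_⟩
      have hxy : x = y := Subtype.ext (by rw [huniq _ x.2, huniq _ y.2])
      rw [hxy]
  · -- 2r < 1
    constructor
    · intro hPC
      by_contra hlt
      push_neg at hlt
      exact CovIAux.not_pc hr hm1 h2 h1 hlt hPC
    · intro hexc
      have hm2 : 2 ≤ m := by
        by_contra hml
        have : m = 1 := by omega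
        subst this
        norm_num at hexc
        linarith
      rw [← isPathConnected_iff_pathConnectedSpace]
      have hp : sys m r (pcfg m r) := sys_pcfg hr hm1 h2 h1
      refine ⟨pcfg m r, sys_mem hr hp, ?_⟩
      intro y hy
      obtain ⟨σ, hσ⟩ := exists_sys hr hy
      have j1 : JoinedIn (CovI (m + 1) r) y (pcfg m r ∘ ⇑σ⁻¹) := by
        refine joined_of_sys hr σ hσ ?_
        rw [comp_inv_comp]; exact hp
      exact (j1.trans (joined_perm hr hm2 h2 h1 hexc σ)).symm
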